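/- arXiv:1707.01954 — 2 statements merged into one kernel-verified Lean document; each statement's English description precedes it below -/
import Mathlib

section
/- Let M be a nonsingular N×N real matrix whose powers are uniformly bounded: ‖M^k‖ ≤ C̃ for all k ≥ 0. Let (M_k)_{k≥1} be a sequence of N×N matrices with ‖M_k − M‖ ≤ C/σ^k for some σ > 1 and constant C > 0. Then the products M^{(k)} := M_k M_{k−1} ⋯ M_1 are uniformly bounded: there exists a finite constant Ĉ such that ‖M^{(k)}‖ ≤ Ĉ for all k ≥ 1. -/
/-- If the nonsingular matrix `M` has uniformly bounded powers
(`μnorm (M^k) ≤ C̃`) and `μnorm (M_k − M) ≤ C/σ^k` with `σ > 1`, then the ordered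
products `M^{(k)} = M_k ⋯ M_1` are uniformly bounded. -/
theorem stmt2 (N : ℕ) (M : Matrix (Fin N) (Fin N) ℝ) (hM : IsUnit M.det)
    (μnorm : Matrix (Fin N) (Fin N) ℝ → ℝ)
    (hadd : ∀ A B, μnorm (A + B) ≤ μnorm A + μnorm B)
    (hsmul : ∀ (c : ℝ) A, μnorm (c • A) = |c| * μnorm A)
    (hdef : ∀ A, μnorm A = 0 ↔ A = 0)
    (hsub : ∀ A B, μnorm (A * B) ≤ μnorm A * μnorm B)
    (hone : μnorm 1 = 1)
    (Ct : ℝ) (hCt : ∀ k : ℕ, μnorm (M ^ k) ≤ Ct)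
    (Ms : ℕ → Matrix (Fin N) (Fin N) ℝ) (C σ : ℝ) (hσ : 1 < σ) (hC : 0 < C)
    (hclose : ∀ k : ℕ, 1 ≤ k → μnorm (Ms k - M) ≤ C / σ ^ k)
    (P : ℕ → Matrix (Fin N) (Fin N) ℝ)
    (hP0 : P 0 = 1) (hP : ∀ k, P (k + 1) = Ms (k + 1) * P k) :
    ∃ Ch : ℝ, ∀ k : ℕ, 1 ≤ k → μnorm (P k) ≤ Ch := by
  have hσ0 : (0:ℝ) < σ := lt_trans one_pos hσ
  have hzero : μnorm (0 : Matrix (Fin N) (Fin N) ℝ) = 0 := (hdef 0).2 rfl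
  -- nonnegativity of μnorm
  have hnonneg : ∀ A, 0 ≤ μnorm A := by
    intro A
    have hneg : μnorm (-A) = μnorm A := by
      have h := hsmul (-1) A
      simpa using h
    have h1 : μnorm (A + (-A)) ≤ μnorm A + μnorm (-A) := hadd A (-A)
    rw [add_neg_cancel, hzero, hneg] at h1
    linarith
  have hCt1 : (1:ℝ) ≤ Ct := by
    have := hCt 0
    rwa [pow_zero, hone] at this
  have hCt0 : (0:ℝ) < Ct := lt_of_lt_of_le one_pos hCt1
  -- sum of norms
  have hsum : ∀ (s : Finset ℕ) (f : ℕ → Matrix (Fin N) (Fin N) ℝ),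
      μnorm (∑ j ∈ s, f j) ≤ ∑ j ∈ s, μnorm (f j) := by
    intro s f
    induction s using Finset.cons_induction with
    | empty => simp [hzero]
    | cons a s ha ih =>
      rw [Finset.sum_cons, Finset.sum_cons]
      exact le_trans (hadd _ _) (by linarith)
  -- key identity
  have key : ∀ k, P k = M ^ k +
      ∑ j ∈ Finset.range k, M ^ (k - 1 - j) * ((Ms (j+1) - M) * P j) := by
    intro k
    induction k with
    | zero => simp [hP0]
    | succ k ih =>
      have hsplit : Ms (k+1) * P k = M * P k + (Ms (k+1) - M) * P k := by
        noncomm_ring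
      have hM1 : M * P k = M ^ (k+1) +
          ∑ j ∈ Finset.range k, M ^ (k + 1 - 1 - j) * ((Ms (j+1) - M) * P j) := by
        rw [ih, mul_add, Finset.mul_sum, ← pow_succ']
        congr 1
        apply Finset.sum_congr rfl
        intro j hj
        have hjk : j < k := Finset.mem_range.mp hj
        rw [← mul_assoc, ← pow_succ']
        have he : k - 1 - j + 1 = k + 1 - 1 - j := by omega
        rw [he]
      rw [hP, hsplit, hM1, Finset.sum_range_succ]
      have h0 : M ^ (k + 1 - 1 - k) = 1 := by
        have : k + 1 - 1 - k = 0 := by omega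
        rw [this, pow_zero]
      rw [h0, one_mul]
      abel
  -- the recursive bound
  set x : ℕ → ℝ := fun j => Ct * (C / σ ^ (j+1)) with hx
  have hx0 : ∀ j, 0 ≤ x j := by
    intro j
    have : (0:ℝ) < σ ^ (j+1) := pow_pos hσ0 _
    positivity
  have habound : ∀ k, μnorm (P k) ≤ Ct + ∑ j ∈ Finset.range k, x j * μnorm (P j) := by
    intro k
    calc μnorm (P k)
        ≤ μnorm (M ^ k) + μnorm (∑ j ∈ Finset.range k,
            M ^ (k - 1 - j) * ((Ms (j+1) - M) * P j)) := by
          rw [key k] at *; exact hadd _ _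
      _ ≤ Ct + ∑ j ∈ Finset.range k, x j * μnorm (P j) := by
          apply add_le_add (hCt k)
          refine le_trans (hsum _ _) (Finset.sum_le_sum ?_)
          intro j hj
          have h1 : μnorm (M ^ (k-1-j) * ((Ms (j+1) - M) * P j)) ≤
              μnorm (M ^ (k-1-j)) * μnorm ((Ms (j+1) - M) * P j) := hsub _ _
          have h2 : μnorm ((Ms (j+1) - M) * P j) ≤
              μnorm (Ms (j+1) - M) * μnorm (P j) := hsub _ _
          have h3 : μnorm (Ms (j+1) - M) ≤ C / σ ^ (j+1) := hclose (j+1) (by omega)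
          have h4 : μnorm (M ^ (k-1-j)) ≤ Ct := hCt _
          have h5 := hnonneg (Ms (j+1) - M)
          have h6 := hnonneg (P j)
          have h7 := hnonneg (M ^ (k-1-j))
          have h8 : μnorm ((Ms (j+1) - M) * P j) ≤ (C / σ ^ (j+1)) * μnorm (P j) :=
            le_trans h2 (mul_le_mul_of_nonneg_right h3 h6)
          calc μnorm (M ^ (k-1-j) * ((Ms (j+1) - M) * P j))
              ≤ μnorm (M ^ (k-1-j)) * μnorm ((Ms (j+1) - M) * P j) := h1
            _ ≤ Ct * ((C / σ ^ (j+1)) * μnorm (P j)) := by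
                apply mul_le_mul h4 h8 (hnonneg _) (le_of_lt hCt0)
            _ = x j * μnorm (P j) := by rw [hx]; ring
  -- the comparison product
  set Q : ℕ → ℝ := fun k => ∏ j ∈ Finset.range k, (1 + x j) with hQ
  have hQrec : ∀ k, Q k = 1 + ∑ j ∈ Finset.range k, x j * Q j := by
    intro k
    induction k with
    | zero => simp [hQ]
    | succ k ih =>
      have h1 : Q (k+1) = Q k * (1 + x k) := by
        rw [hQ]; exact Finset.prod_range_succ _ _
      rw [h1, Finset.sum_range_succ, ih]
      ring
  have hQpos : ∀ k, 0 < Q k := by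
    intro k
    apply Finset.prod_pos
    intro j _
    have := hx0 j
    linarith
  -- main bound by strong induction
  have main : ∀ k, μnorm (P k) ≤ Ct * Q k := by
    intro k
    induction k using Nat.strong_induction_on with
    | _ k ih =>
      calc μnorm (P k) ≤ Ct + ∑ j ∈ Finset.range k, x j * μnorm (P j) := habound k
        _ ≤ Ct + ∑ j ∈ Finset.range k, x j * (Ct * Q j) := by
            apply add_le_add_right
            apply Finset.sum_le_sum
            intro j hj
            exact mul_le_mul_of_nonneg_left (ih j (Finset.mem_range.mp hj)) (hx0 j)
        _ = Ct * (1 + ∑ j ∈ Finset.range k, x j * Q j) := by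
            rw [mul_add, mul_one, Finset.mul_sum]
            congr 1
            apply Finset.sum_congr rfl
            intro j _
            ring
        _ = Ct * Q k := by rw [← hQrec]
  -- bound Q uniformly
  have hr1 : 1 / σ < 1 := by
    rw [div_lt_one hσ0]; exact hσ
  have hr0 : 0 < 1 / σ := by positivity
  have hgeo : ∀ k, ∑ j ∈ Finset.range k, (1/σ) ^ j ≤ 1 / (1 - 1/σ) := by
    intro k
    have hne : (1/σ : ℝ) ≠ 1 := ne_of_lt hr1
    rw [geom_sum_eq hne]
    have hpow : (0:ℝ) < (1/σ) ^ k := pow_pos hr0 _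
    have h5 : (0:ℝ) < 1 - 1/σ := by linarith
    have heq : ((1/σ)^k - 1)/((1/σ) - 1) = (1 - (1/σ)^k)/(1 - (1/σ)) := by
      rw [← neg_div_neg_eq]; ring_nf
    rw [heq, div_le_div_iff₀ h5 h5]
    nlinarith
  have hxsum : ∀ k, ∑ j ∈ Finset.range k, x j ≤ Ct * C * (1 / (1 - 1/σ)) := by
    intro k
    have h1 : ∀ j ∈ Finset.range k, x j ≤ Ct * C * (1/σ) ^ j := by
      intro j _
      rw [hx]
      have h2 : σ ^ j ≤ σ ^ (j+1) := pow_le_pow_right₀ (le_of_lt hσ) (by omega)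
      have h3 : (0:ℝ) < σ ^ j := pow_pos hσ0 _
      have h4 : C / σ ^ (j+1) ≤ C / σ ^ j := by
        apply div_le_div_of_nonneg_left (le_of_lt hC) h3 h2
      calc Ct * (C / σ ^ (j+1)) ≤ Ct * (C / σ ^ j) :=
            mul_le_mul_of_nonneg_left h4 (le_of_lt hCt0)
        _ = Ct * C * (1/σ) ^ j := by
            rw [div_pow, one_pow]; ring
    calc ∑ j ∈ Finset.range k, x j ≤ ∑ j ∈ Finset.range k, Ct * C * (1/σ) ^ j :=
          Finset.sum_le_sum h1
      _ = Ct * C * ∑ j ∈ Finset.range k, (1/σ) ^ j := by rw [Finset.mul_sum]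
      _ ≤ Ct * C * (1 / (1 - 1/σ)) := by
          apply mul_le_mul_of_nonneg_left (hgeo k)
          positivity
  have hQbound : ∀ k, Q k ≤ Real.exp (Ct * C * (1 / (1 - 1/σ))) := by
    intro k
    have h1 : Q k ≤ Real.exp (∑ j ∈ Finset.range k, x j) := by
      rw [Real.exp_sum]
      apply Finset.prod_le_prod
      · intro j _; linarith [hx0 j]
      · intro j _
        have := Real.add_one_le_exp (x j)
        linarith
    exact le_trans h1 (Real.exp_le_exp.mpr (hxsum k))
  refine ⟨Ct * Real.exp (Ct * C * (1 / (1 - 1/σ))), fun k _ => ?_⟩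
  exact le_trans (main k) (mul_le_mul_of_nonneg_left (hQbound k) (le_of_lt hCt0))
end

section
/- Let S ∈ ℝ^{N×N} be nonsingular with uniformly bounded powers, let S_k satisfy ‖S_k − S‖ ≤ C/σ^k with σ > 1, and suppose lim_{ℓ→∞} S^ℓ v exists for all v ∈ ℝ^N. Define u_{k+1} := lim_{ℓ→∞} S^ℓ S^{(k)} d for fixed d, where S^{(k)} = S_k ⋯ S_1. Then ‖u_{k+1} − u_k‖ ≤ C̃/σ^k for a constant C̃, and hence (u_k) converges. -/
open Filter Topology

/-- The ∞-operator norm (maximum absolute row sum) of a real matrix. -/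
noncomputable def infNorm {a b : ℕ} (A : Matrix (Fin a) (Fin b) ℝ) : ℝ :=
  ⨆ i, ∑ j, |A i j|

lemma infNorm_nonneg {a b : ℕ} (A : Matrix (Fin a) (Fin b) ℝ) : 0 ≤ infNorm A :=
  Real.iSup_nonneg fun _ => Finset.sum_nonneg fun _ _ => abs_nonneg _

lemma rowSum_le_infNorm {a b : ℕ} (A : Matrix (Fin a) (Fin b) ℝ) (i : Fin a) :
    ∑ j, |A i j| ≤ infNorm A := by
  exact le_ciSup (f := fun i => ∑ j, |A i j|) (Set.Finite.bddAbove (Set.finite_range _)) i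

lemma infNorm_le {a b : ℕ} (A : Matrix (Fin a) (Fin b) ℝ) (c : ℝ) (hc : 0 ≤ c)
    (h : ∀ i, ∑ j, |A i j| ≤ c) : infNorm A ≤ c :=
  Real.iSup_le h hc

lemma entry_le_infNorm {a b : ℕ} (A : Matrix (Fin a) (Fin b) ℝ) (i : Fin a) (j : Fin b) :
    |A i j| ≤ infNorm A :=
  (Finset.single_le_sum (fun j _ => abs_nonneg (A i j)) (Finset.mem_univ j)).trans
    (rowSum_le_infNorm A i)

lemma infNorm_zero {a b : ℕ} : infNorm (0 : Matrix (Fin a) (Fin b) ℝ) = 0 :=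
  le_antisymm (infNorm_le _ 0 le_rfl (by simp)) (infNorm_nonneg _)

lemma infNorm_add_le {a b : ℕ} (A B : Matrix (Fin a) (Fin b) ℝ) :
    infNorm (A + B) ≤ infNorm A + infNorm B := by
  apply infNorm_le _ _ (add_nonneg (infNorm_nonneg A) (infNorm_nonneg B))
  intro i
  calc ∑ j, |(A + B) i j| ≤ ∑ j, (|A i j| + |B i j|) :=
        Finset.sum_le_sum fun j _ => by simp [Matrix.add_apply, abs_add_le]
    _ = (∑ j, |A i j|) + ∑ j, |B i j| := Finset.sum_add_distrib
    _ ≤ infNorm A + infNorm B := add_le_add (rowSum_le_infNorm A i) (rowSum_le_infNorm B i)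

lemma infNorm_sum_le {a b : ℕ} {ι : Type*} (s : Finset ι) (f : ι → Matrix (Fin a) (Fin b) ℝ) :
    infNorm (∑ x ∈ s, f x) ≤ ∑ x ∈ s, infNorm (f x) := by
  induction s using Finset.cons_induction with
  | empty => simp [infNorm_zero]
  | cons x s hx ih =>
    rw [Finset.sum_cons, Finset.sum_cons]
    exact (infNorm_add_le _ _).trans (by linarith)

lemma infNorm_mul_le {a b c : ℕ} (A : Matrix (Fin a) (Fin b) ℝ) (B : Matrix (Fin b) (Fin c) ℝ) :
    infNorm (A * B) ≤ infNorm A * infNorm B := by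
  apply infNorm_le _ _ (mul_nonneg (infNorm_nonneg A) (infNorm_nonneg B))
  intro i
  calc ∑ j, |(A * B) i j| ≤ ∑ j, ∑ m, |A i m| * |B m j| := by
        refine Finset.sum_le_sum fun j _ => ?_
        rw [Matrix.mul_apply]
        refine (Finset.abs_sum_le_sum_abs _ _).trans (le_of_eq ?_)
        exact Finset.sum_congr rfl fun m _ => abs_mul _ _
    _ = ∑ m, |A i m| * ∑ j, |B m j| := by
        rw [Finset.sum_comm]
        exact Finset.sum_congr rfl fun m _ => (Finset.mul_sum _ _ _).symm
    _ ≤ ∑ m, |A i m| * infNorm B :=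
        Finset.sum_le_sum fun m _ =>
          mul_le_mul_of_nonneg_left (rowSum_le_infNorm B m) (abs_nonneg _)
    _ = (∑ m, |A i m|) * infNorm B := (Finset.sum_mul _ _ _).symm
    _ ≤ infNorm A * infNorm B :=
        mul_le_mul_of_nonneg_right (rowSum_le_infNorm A i) (infNorm_nonneg B)

lemma infNorm_le_of_tendsto {a b : ℕ} (f : ℕ → Matrix (Fin a) (Fin b) ℝ)
    (x : Matrix (Fin a) (Fin b) ℝ) (c : ℝ) (hc : 0 ≤ c)
    (hf : Tendsto f atTop (nhds x)) (hb : ∀ n, infNorm (f n) ≤ c) : infNorm x ≤ c := by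
  apply infNorm_le _ _ hc
  intro i
  have hrow : Tendsto (fun n => ∑ j, |f n i j|) atTop (nhds (∑ j, |x i j|)) := by
    refine tendsto_finset_sum _ fun j _ => ?_
    exact (tendsto_pi_nhds.1 (tendsto_pi_nhds.1 hf i) j).abs
  exact le_of_tendsto hrow (Eventually.of_forall fun n => (rowSum_le_infNorm (f n) i).trans (hb n))

lemma prod_one_add_eq (g : ℕ → ℝ) (k : ℕ) :
    ∏ j ∈ Finset.range k, (1 + g j) =
      1 + ∑ j ∈ Finset.range k, g j * ∏ i ∈ Finset.range j, (1 + g i) := by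
  induction k with
  | zero => simp
  | succ k ih => rw [Finset.prod_range_succ, Finset.sum_range_succ, ih]; ring

/-- With `S` nonsingular with uniformly bounded powers,
`‖S_k − S‖ ≤ C/σ^k` (`σ > 1`), `S^ℓ v` convergent for every `v`, and
`u_{k+1} := lim_ℓ S^ℓ S^{(k)} d`, one has `‖u_{k+1} − u_k‖ ≤ C̃/σ^k`
for a constant `C̃`, and hence `(u_k)` converges. -/
theorem stmt8 (N : ℕ) (S : Matrix (Fin N) (Fin N) ℝ) (hS : IsUnit S.det)
    (Cb : ℝ) (hCb : ∀ k : ℕ, infNorm (S ^ k) ≤ Cb)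
    (Ss : ℕ → Matrix (Fin N) (Fin N) ℝ) (C σ : ℝ) (hσ : 1 < σ) (hC : 0 < C)
    (hclose : ∀ k : ℕ, 1 ≤ k → infNorm (Ss k - S) ≤ C / σ ^ k)
    (d : Matrix (Fin N) (Fin 3) ℝ)
    (P : ℕ → Matrix (Fin N) (Fin N) ℝ)
    (hP0 : P 0 = 1) (hP : ∀ k, P (k + 1) = Ss (k + 1) * P k)
    (hlim : ∀ v : Matrix (Fin N) (Fin 3) ℝ,
      ∃ w, Tendsto (fun ℓ => S ^ ℓ * v) atTop (nhds w))
    (u : ℕ → Matrix (Fin N) (Fin 3) ℝ)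
    (hu : ∀ k : ℕ, Tendsto (fun ℓ => S ^ ℓ * (P k * d)) atTop (nhds (u (k + 1)))) :
    (∃ Ct : ℝ, ∀ k : ℕ, 1 ≤ k → infNorm (u (k + 1) - u k) ≤ Ct / σ ^ k) ∧
    ∃ l, Tendsto u atTop (nhds l) := by
  have hσ0 : (0 : ℝ) < σ := lt_trans one_pos hσ
  have hCb0 : (0 : ℝ) ≤ Cb := (infNorm_nonneg (S ^ 0)).trans (hCb 0)
  -- the perturbation expansion of P k
  have hid : ∀ k, P k = S ^ k +
      ∑ j ∈ Finset.range k, S ^ (k - 1 - j) * ((Ss (j + 1) - S) * P j) := by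
    intro k
    induction k with
    | zero => simp [hP0]
    | succ k ih =>
      have h1 : P (k + 1) = S * P k + (Ss (k + 1) - S) * P k := by
        rw [hP k, Matrix.sub_mul]; abel
      calc P (k + 1) = S * P k + (Ss (k + 1) - S) * P k := h1
        _ = S * (S ^ k + ∑ j ∈ Finset.range k, S ^ (k - 1 - j) * ((Ss (j + 1) - S) * P j))
              + (Ss (k + 1) - S) * P k := by rw [← ih]
        _ = S ^ (k + 1) + ((∑ j ∈ Finset.range k, S ^ (k - j) * ((Ss (j + 1) - S) * P j))
              + (Ss (k + 1) - S) * P k) := by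
            rw [mul_add, Finset.mul_sum, ← pow_succ', add_assoc]
            congr 2
            refine Finset.sum_congr rfl fun j hj => ?_
            rw [← Matrix.mul_assoc, ← pow_succ']
            congr 2
            have := Finset.mem_range.1 hj
            omega
        _ = S ^ (k + 1) + ∑ j ∈ Finset.range (k + 1),
              S ^ (k + 1 - 1 - j) * ((Ss (j + 1) - S) * P j) := by
            rw [Finset.sum_range_succ]
            simp [Nat.add_sub_cancel]
  -- the sequence of products bounds
  set c : ℕ → ℝ := fun j => Cb * C / σ ^ j with hc
  have hc0 : ∀ j, 0 ≤ c j := fun j => div_nonneg (mul_nonneg hCb0 hC.le) (pow_nonneg hσ0.le j)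
  set Q : ℕ → ℝ := fun k => ∏ j ∈ Finset.range k, (1 + c (j + 1)) with hQdef
  -- uniform bound on Q
  set MQ : ℝ := Real.exp (Cb * C * (σ⁻¹ / (1 - σ⁻¹))) with hMQdef
  have hrσ : σ⁻¹ < 1 := inv_lt_one_of_one_lt₀ hσ
  have hrσ0 : (0 : ℝ) ≤ σ⁻¹ := inv_nonneg.2 hσ0.le
  have hgeom : ∀ k, ∑ j ∈ Finset.range k, (σ⁻¹) ^ j ≤ 1 / (1 - σ⁻¹) := by
    intro k
    have h := geom_sum_mul (σ⁻¹) k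
    rw [le_div_iff₀ (by linarith : (0:ℝ) < 1 - σ⁻¹)]
    nlinarith [pow_nonneg hrσ0 k]
  have hQle : ∀ k, Q k ≤ MQ := by
    intro k
    have h1 : Q k ≤ Real.exp (∑ j ∈ Finset.range k, c (j + 1)) := by
      show (∏ j ∈ Finset.range k, (1 + c (j + 1))) ≤ _
      rw [Real.exp_sum]
      refine Finset.prod_le_prod (fun j _ => by linarith [hc0 (j + 1)]) fun j _ => ?_
      have := Real.add_one_le_exp (c (j + 1))
      linarith
    refine h1.trans (Real.exp_le_exp.2 ?_)
    have h2 : ∑ j ∈ Finset.range k, c (j + 1)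
        = Cb * C * ∑ j ∈ Finset.range k, (σ⁻¹) ^ (j + 1) := by
      rw [Finset.mul_sum]
      refine Finset.sum_congr rfl fun j _ => ?_
      show Cb * C / σ ^ (j + 1) = _
      rw [inv_pow, div_eq_mul_inv]
    rw [h2]
    have h3 : ∑ j ∈ Finset.range k, (σ⁻¹) ^ (j + 1)
        = σ⁻¹ * ∑ j ∈ Finset.range k, (σ⁻¹) ^ j := by
      rw [Finset.mul_sum]
      exact Finset.sum_congr rfl fun j _ => by rw [pow_succ']
    rw [h3]
    have h4 : σ⁻¹ * ∑ j ∈ Finset.range k, (σ⁻¹) ^ j ≤ σ⁻¹ * (1 / (1 - σ⁻¹)) :=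
      mul_le_mul_of_nonneg_left (hgeom k) hrσ0
    calc Cb * C * (σ⁻¹ * ∑ j ∈ Finset.range k, (σ⁻¹) ^ j)
        ≤ Cb * C * (σ⁻¹ * (1 / (1 - σ⁻¹))) :=
          mul_le_mul_of_nonneg_left h4 (mul_nonneg hCb0 hC.le)
      _ = Cb * C * (σ⁻¹ / (1 - σ⁻¹)) := by ring
  -- bound on P k
  have hPb : ∀ k, infNorm (P k) ≤ Cb * Q k := by
    intro k
    induction k using Nat.strong_induction_on with
    | _ k ih =>
      have step1 : infNorm (P k) ≤ infNorm (S ^ k)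
          + ∑ j ∈ Finset.range k, infNorm (S ^ (k - 1 - j) * ((Ss (j + 1) - S) * P j)) := by
        rw [hid k]
        exact (infNorm_add_le _ _).trans (add_le_add le_rfl (infNorm_sum_le _ _))
      have step2 : ∀ j ∈ Finset.range k,
          infNorm (S ^ (k - 1 - j) * ((Ss (j + 1) - S) * P j))
            ≤ Cb * (C / σ ^ (j + 1) * (Cb * Q j)) := by
        intro j hj
        have hj' := Finset.mem_range.1 hj
        have t1 : infNorm (S ^ (k - 1 - j) * ((Ss (j + 1) - S) * P j))
            ≤ infNorm (S ^ (k - 1 - j)) * (infNorm (Ss (j + 1) - S) * infNorm (P j)) :=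
          (infNorm_mul_le _ _).trans
            (mul_le_mul_of_nonneg_left (infNorm_mul_le _ _) (infNorm_nonneg _))
        refine t1.trans ?_
        have h5 : infNorm (Ss (j + 1) - S) * infNorm (P j) ≤ C / σ ^ (j + 1) * (Cb * Q j) :=
          mul_le_mul (hclose (j + 1) (by omega)) (ih j hj')
            (infNorm_nonneg _) (div_nonneg hC.le (pow_nonneg hσ0.le _))
        exact mul_le_mul (hCb _) h5
          (mul_nonneg (infNorm_nonneg _) (infNorm_nonneg _)) hCb0
      calc infNorm (P k) ≤ infNorm (S ^ k)
            + ∑ j ∈ Finset.range k, infNorm (S ^ (k - 1 - j) * ((Ss (j + 1) - S) * P j)) := step1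
        _ ≤ Cb + ∑ j ∈ Finset.range k, Cb * (C / σ ^ (j + 1) * (Cb * Q j)) :=
            add_le_add (hCb k) (Finset.sum_le_sum step2)
        _ = Cb * (1 + ∑ j ∈ Finset.range k, c (j + 1) * Q j) := by
            rw [mul_add, mul_one, Finset.mul_sum]
            congr 1
            refine Finset.sum_congr rfl fun j _ => ?_
            simp only [hc]
            ring
        _ = Cb * Q k := by
            have hQk : Q k = 1 + ∑ j ∈ Finset.range k, c (j + 1) * Q j := by
              simp only [hQdef]
              exact prod_one_add_eq (fun j => c (j + 1)) k
            rw [hQk]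
  have hPb' : ∀ k, infNorm (P k) ≤ Cb * MQ := fun k =>
    (hPb k).trans (mul_le_mul_of_nonneg_left (hQle k) hCb0)
  -- the key difference bound
  set Ct : ℝ := Cb * (C * (Cb * MQ * infNorm d)) with hCtdef
  have hCt0 : 0 ≤ Ct :=
    mul_nonneg hCb0 (mul_nonneg hC.le (mul_nonneg
      (mul_nonneg hCb0 (Real.exp_pos _).le) (infNorm_nonneg d)))
  have key : ∀ k : ℕ, 1 ≤ k → infNorm (u (k + 1) - u k) ≤ Ct / σ ^ k := by
    intro k hk
    obtain ⟨m, rfl⟩ : ∃ m, k = m + 1 := ⟨k - 1, by omega⟩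
    set g : ℕ → Matrix (Fin N) (Fin 3) ℝ :=
      fun ℓ => S ^ ℓ * ((Ss (m + 1) - S) * (P m * d)) with hgdef
    have heq : ∀ ℓ, g ℓ = S ^ ℓ * (P (m + 1) * d) - S ^ (ℓ + 1) * (P m * d) := by
      intro ℓ
      rw [hgdef]
      simp only [hP m, Matrix.sub_mul, Matrix.mul_sub, Matrix.mul_assoc, pow_succ]
    have htend : Tendsto g atTop (nhds (u (m + 1 + 1) - u (m + 1))) := by
      have h1 := hu (m + 1)
      have h2 : Tendsto (fun ℓ => S ^ (ℓ + 1) * (P m * d)) atTop (nhds (u (m + 1))) :=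
        (tendsto_add_atTop_iff_nat 1).2 (hu m)
      have := h1.sub h2
      simpa only [← heq] using this
    have hbound : ∀ ℓ, infNorm (g ℓ) ≤ Ct / σ ^ (m + 1) := by
      intro ℓ
      have t1 : infNorm (g ℓ)
          ≤ infNorm (S ^ ℓ) * (infNorm (Ss (m + 1) - S) * (infNorm (P m) * infNorm d)) := by
        rw [hgdef]
        refine (infNorm_mul_le _ _).trans (mul_le_mul_of_nonneg_left ?_ (infNorm_nonneg _))
        exact (infNorm_mul_le _ _).trans
          (mul_le_mul_of_nonneg_left (infNorm_mul_le _ _) (infNorm_nonneg _))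
      refine t1.trans ?_
      have h6 : infNorm (P m) * infNorm d ≤ Cb * MQ * infNorm d :=
        mul_le_mul_of_nonneg_right (hPb' m) (infNorm_nonneg d)
      have h7 : infNorm (Ss (m + 1) - S) * (infNorm (P m) * infNorm d)
          ≤ C / σ ^ (m + 1) * (Cb * MQ * infNorm d) :=
        mul_le_mul (hclose (m + 1) (by omega)) h6
          (mul_nonneg (infNorm_nonneg _) (infNorm_nonneg _))
          (div_nonneg hC.le (pow_nonneg hσ0.le _))
      have h8 : infNorm (S ^ ℓ) * (infNorm (Ss (m + 1) - S) * (infNorm (P m) * infNorm d))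
          ≤ Cb * (C / σ ^ (m + 1) * (Cb * MQ * infNorm d)) :=
        mul_le_mul (hCb ℓ) h7
          (mul_nonneg (infNorm_nonneg _) (mul_nonneg (infNorm_nonneg _) (infNorm_nonneg _)))
          hCb0
      refine h8.trans (le_of_eq ?_)
      rw [hCtdef]
      field_simp
    exact infNorm_le_of_tendsto g _ _ (div_nonneg hCt0 (pow_nonneg hσ0.le _)) htend hbound
  refine ⟨⟨Ct, key⟩, ?_⟩
  -- convergence of u
  have hentry : ∀ (i : Fin N) (j : Fin 3),
      ∃ L : ℝ, Tendsto (fun n => u (n + 1) i j) atTop (nhds L) := by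
    intro i j
    have hcauchy : CauchySeq (fun n => u (n + 1) i j) := by
      refine cauchySeq_of_le_geometric σ⁻¹ (Ct / σ) hrσ ?_
      intro n
      have h1 := key (n + 1) (by omega)
      have h2 : |(u (n + 1 + 1) - u (n + 1)) i j| ≤ Ct / σ ^ (n + 1) :=
        (entry_le_infNorm _ i j).trans h1
      rw [Real.dist_eq]
      have h3 : (u (n + 1 + 1) - u (n + 1)) i j = u (n + 1 + 1) i j - u (n + 1) i j := by
        simp [Matrix.sub_apply]
      rw [h3] at h2
      rw [abs_sub_comm] at h2
      refine h2.trans (le_of_eq ?_)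
      rw [pow_succ']
      rw [inv_pow, div_eq_mul_inv, div_eq_mul_inv, mul_inv]
      ring
    exact cauchySeq_tendsto_of_complete hcauchy
  choose L hL using hentry
  refine ⟨Matrix.of L, ?_⟩
  refine tendsto_pi_nhds.2 ?_
  intro i
  rw [tendsto_pi_nhds]
  intro j
  exact (tendsto_add_atTop_iff_nat 1).1 (hL i j)
end
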